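/- For every integer k ≥ 6, there exists a bijection f : ℕ → ℤ that avoids k-term arithmetic progressions. -/

import Mathlib

def brlt (u v : ℕ) : Bool :=
  if u = v then false
  else if u % 2 = v % 2 then brlt (u / 2) (v / 2)
  else decide (u % 2 = 1)
termination_by u + v
decreasing_by
  have : u ≠ v := by assumption
  omega

lemma brlt_same_par {u v : ℕ} (hne : u ≠ v) (h : u % 2 = v % 2) :
    brlt u v = brlt (u/2) (v/2) := by
  rw [brlt]; simp [hne, h]

lemma brlt_diff_par {u v : ℕ} (h : u % 2 ≠ v % 2) :
    brlt u v = decide (u % 2 = 1) := by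
  have hne : u ≠ v := fun e => h (by rw [e])
  rw [brlt]; simp [hne, h]

-- key bit lemma: adding 2^t * m (m odd) : order decided by testBit t
lemma brlt_add_pow (t : ℕ) : ∀ (m x : ℕ), m % 2 = 1 →
    brlt x (x + 2^t * m) = x.testBit t ∧ brlt (x + 2^t * m) x = !x.testBit t := by
  induction t with
  | zero =>
    intro m x hm
    have hne : x ≠ x + 2^0*m := by omega
    have hpar : x % 2 ≠ (x + 2^0*m) % 2 := by omega
    have hx0 : (2:ℕ)^0*m = m := by ring
    constructor
    · rw [brlt_diff_par hpar, Nat.testBit_zero]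
    · rw [brlt_diff_par (fun e => hpar e.symm), Nat.testBit_zero]
      rcases Nat.mod_two_eq_zero_or_one x with h | h
      · have h2 : (x + 2^0*m) % 2 = 1 := by omega
        simp [h, h2]; omega
      · have h2 : (x + 2^0*m) % 2 = 0 := by omega
        simp [h, h2]; omega
  | succ t ih =>
    intro m x hm
    have h2 : 2^(t+1)*m = 2*(2^t*m) := by ring
    have hpos : 0 < 2^t*m := by have := Nat.pow_pos (n := t) (by norm_num : 0 < 2); nlinarith [Nat.one_le_iff_ne_zero.mpr (show m ≠ 0 by omega)]
    have hne : x ≠ x + 2^(t+1)*m := by omega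
    have hpar : x % 2 = (x + 2^(t+1)*m) % 2 := by omega
    have hdiv : (x + 2^(t+1)*m)/2 = x/2 + 2^t*m := by omega
    have ht : x.testBit (t+1) = (x/2).testBit t := by
      rw [Nat.testBit_succ]
    obtain ⟨h1, h2'⟩ := ih m (x/2) hm
    refine ⟨?_, ?_⟩
    · rw [brlt_same_par hne hpar, hdiv, h1, ht]
    · rw [brlt_same_par (fun e => hne e.symm) (by omega), hdiv, h2', ht]

lemma testBit_add_pow (t : ℕ) : ∀ (m x : ℕ), m % 2 = 1 →
    (x + 2^t*m).testBit t = !x.testBit t := by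
  induction t with
  | zero =>
    intro m x hm
    have hx0 : (2:ℕ)^0*m = m := by ring
    rw [Nat.testBit_zero, Nat.testBit_zero]
    rcases Nat.mod_two_eq_zero_or_one x with h | h
    · have h2 : (x + 2^0*m) % 2 = 1 := by omega
      simp [h, h2]; omega
    · have h2 : (x + 2^0*m) % 2 = 0 := by omega
      simp [h, h2]; omega
  | succ t ih =>
    intro m x hm
    have he : (2:ℕ)^(t+1)*m = 2*(2^t*m) := by ring
    have hdiv : (x + 2^(t+1)*m)/2 = x/2 + 2^t*m := by omega
    rw [Nat.testBit_succ, Nat.testBit_succ, hdiv, ih m (x/2) hm]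

lemma no_asc3 {x δ : ℕ} (hδ : δ ≠ 0) (h1 : brlt x (x+δ) = true)
    (h2 : brlt (x+δ) (x+δ+δ) = true) : False := by
  obtain ⟨t, m, hm, rfl⟩ := Nat.exists_eq_two_pow_mul_odd hδ
  have hm' : m % 2 = 1 := Nat.odd_iff.mp hm
  have k1 := (brlt_add_pow t m x hm').1
  have k2 := (brlt_add_pow t m (x + 2^t*m) hm').1
  have k3 := testBit_add_pow t m x hm'
  rw [k1] at h1
  rw [k2, k3, h1] at h2
  simp at h2

lemma no_desc3 {x δ : ℕ} (hδ : δ ≠ 0) (h1 : brlt (x+δ+δ) (x+δ) = true)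
    (h2 : brlt (x+δ) x = true) : False := by
  obtain ⟨t, m, hm, rfl⟩ := Nat.exists_eq_two_pow_mul_odd hδ
  have hm' : m % 2 = 1 := Nat.odd_iff.mp hm
  have k1 := (brlt_add_pow t m x hm').2
  have k2 := (brlt_add_pow t m (x + 2^t*m) hm').2
  have k3 := testBit_add_pow t m x hm'
  rw [k1] at h2
  rw [k2, k3] at h1
  rw [Bool.not_eq_true'] at h2
  rw [h2] at h1
  simp at h1

-- L2 : if B ≡ 0, w ≡ 2^t mod 2^(t+1) then brlt B w = false
lemma brlt_low (t : ℕ) : ∀ B w : ℕ, B % 2^(t+1) = 0 → w % 2^(t+1) = 2^t →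
    brlt B w = false := by
  induction t with
  | zero =>
    intro B w hB hw
    have hpar : B % 2 ≠ w % 2 := by simp at hB hw; omega
    rw [brlt_diff_par hpar]
    simp at hB ⊢
    omega
  | succ t ih =>
    intro B w hB hw
    have hp : 0 < (2:ℕ)^t := Nat.pow_pos (n := t) (by norm_num)
    obtain ⟨q, hq⟩ := Nat.dvd_of_mod_eq_zero hB
    have hw' := Nat.div_add_mod w (2^(t+1+1))
    rw [hw] at hw'
    set r := w / 2^(t+1+1) with hr
    have heB : B = 2*(2^(t+1)*q) := by rw [hq]; ring
    have heW : w = 2*(2^(t+1)*r + 2^t) := by rw [← hw']; ring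
    have hB2 : B/2 = 2^(t+1)*q := by omega
    have hw2 : w/2 = 2^(t+1)*r + 2^t := by omega
    have hBr : (B/2) % 2^(t+1) = 0 := by rw [hB2]; exact Nat.mul_mod_right _ _
    have hlt : (2:ℕ)^t < 2^(t+1) := by
      have h : (2:ℕ)^(t+1) = 2*2^t := by ring
      omega
    have hwr : (w/2) % 2^(t+1) = 2^t := by
      rw [hw2, Nat.mul_add_mod]
      exact Nat.mod_eq_of_lt hlt
    have hp2 : 0 < (2:ℕ)^(t+1) := Nat.pow_pos (n := _) (by norm_num)
    have hne : B ≠ w := by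
      intro e
      rw [e] at hB; rw [hB] at hw; omega
    rw [brlt_same_par hne (by omega)]
    exact ih (B/2) (w/2) hBr hwr

lemma brlt_irrefl (a : ℕ) : brlt a a = false := by rw [brlt]; simp

-- crux lemma for the "beta" case
lemma no_beta {B w δ : ℕ} (hδ : δ ≠ 0) (hsum : B + w = δ)
    (h1 : brlt (B + δ) B = true) (h2 : brlt w (w + δ) = true)
    (h3 : brlt B w = true) : False := by
  obtain ⟨t, m, hmo, rfl⟩ := Nat.exists_eq_two_pow_mul_odd hδ
  have hm : m % 2 = 1 := Nat.odd_iff.mp hmo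
  have hB : B.testBit t = false := by
    have := (brlt_add_pow t m B hm).2
    rw [h1] at this
    cases hBB : B.testBit t
    · rfl
    · rw [hBB] at this; simp at this
  have hw : w.testBit t = true := by
    have := (brlt_add_pow t m w hm).1
    rw [h2] at this; exact this.symm
  -- decompose B and w
  have hP : 0 < (2:ℕ)^t := Nat.pow_pos (n := t) (by norm_num)
  have hBd := Nat.div_add_mod B (2^t)
  have hwd := Nat.div_add_mod w (2^t)
  have hBq : (B / 2^t) % 2 = 0 := by
    have := Nat.testBit_eq_decide_div_mod_eq (x := B) (i := t)
    rw [hB] at this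
    have h' : ¬ (B / 2^t % 2 = 1) := by
      intro h; rw [h] at this; simp at this
    omega
  have hwq : (w / 2^t) % 2 = 1 := by
    have := Nat.testBit_eq_decide_div_mod_eq (x := w) (i := t)
    rw [hw] at this
    by_contra h'
    rw [eq_comm] at this
    rw [decide_eq_true_iff] at this
    exact h' this
  set aB := B / 2^t / 2 with haB
  set aw := w / 2^t / 2 with haw
  have hBe : B = 2^(t+1) * aB + B % 2^t := by
    have h1' : B / 2^t = 2 * aB := by omega
    have : (2:ℕ)^(t+1) = 2^t * 2 := by ring
    rw [this]
    have := hBd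
    nlinarith [hBd]
  have hwe : w = 2^(t+1) * aw + 2^t + w % 2^t := by
    have h1' : w / 2^t = 2 * aw + 1 := by omega
    have h2' : (2:ℕ)^(t+1) = 2^t * 2 := by ring
    rw [h2']
    nlinarith [hwd]
  have hBm : B % 2^t < 2^t := Nat.mod_lt _ hP
  have hwm : w % 2^t < 2^t := Nat.mod_lt _ hP
  -- sum equation
  have hde : (2:ℕ)^t * m = 2^(t+1) * (m/2) + 2^t := by
    have : m = 2*(m/2) + 1 := by omega
    calc (2:ℕ)^t * m = 2^t * (2*(m/2)+1) := by rw [← this]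
    _ = 2^(t+1) * (m/2) + 2^t := by ring
  have hkey : B % 2^t = 0 ∧ w % 2^t = 0 := by
    set M := (2:ℕ)^(t+1) with hM
    have hM2 : M = 2^t + 2^t := by rw [hM]; ring
    have heq : M*aB + B % 2^t + (M*aw + 2^t + w % 2^t) = M*(m/2) + 2^t := by
      rw [← hBe, ← hwe, hsum, hde]
    have hXY : M*aB + M*aw = M*(aB+aw) := by ring
    rcases le_or_gt (m/2) (aB + aw) with h | h
    · have hmul : M*(m/2) ≤ M*(aB+aw) := Nat.mul_le_mul_left M h
      omega
    · exfalso
      have hmul : M*(aB+aw+1) ≤ M*(m/2) := Nat.mul_le_mul_left M (Nat.succ_le_of_lt h)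
      have hring : M*(aB+aw+1) = M*(aB+aw) + M := by ring
      omega
  obtain ⟨hB0, hw0⟩ := hkey
  -- now B ≡ 0 and w ≡ 2^t mod 2^(t+1)
  have hBmod : B % 2^(t+1) = 0 := by
    rw [hBe, hB0, Nat.add_zero]
    exact Nat.mul_mod_right _ _
  have hwmod : w % 2^(t+1) = 2^t := by
    have h2f : (2:ℕ)^(t+1) = 2^t + 2^t := by ring
    rw [hwe, hw0, Nat.add_zero, Nat.mul_add_mod]
    exact Nat.mod_eq_of_lt (by omega)
  have := brlt_low t B w hBmod hwmod
  rw [h3] at this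
  simp at this

lemma brlt_asymm_aux : ∀ n a b, a + b ≤ n → brlt a b = true → brlt b a = true → False := by
  intro n
  induction n with
  | zero =>
    intro a b h h1 _
    have : a = 0 ∧ b = 0 := by omega
    rw [this.1, this.2, brlt_irrefl] at h1
    simp at h1
  | succ n ih =>
    intro a b h h1 h2
    by_cases hab : a = b
    · rw [hab, brlt_irrefl] at h1; simp at h1
    · by_cases hp : a % 2 = b % 2
      · rw [brlt_same_par hab hp] at h1
        rw [brlt_same_par (fun e => hab e.symm) hp.symm] at h2
        exact ih (a/2) (b/2) (by omega) h1 h2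
      · rw [brlt_diff_par hp] at h1
        rw [brlt_diff_par (fun e => hp e.symm)] at h2
        simp at h1 h2
        omega

lemma brlt_asymm {a b : ℕ} (h1 : brlt a b = true) (h2 : brlt b a = true) : False :=
  brlt_asymm_aux (a+b) a b le_rfl h1 h2

lemma brlt_trans_aux : ∀ n a b c, a + b + c ≤ n → brlt a b = true → brlt b c = true →
    brlt a c = true := by
  intro n
  induction n with
  | zero =>
    intro a b c h h1 _
    have : a = 0 ∧ b = 0 := by omega
    rw [this.1, this.2, brlt_irrefl] at h1
    simp at h1
  | succ n ih =>
    intro a b c h h1 h2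
    have hab : a ≠ b := by rintro rfl; rw [brlt_irrefl] at h1; simp at h1
    have hbc : b ≠ c := by rintro rfl; rw [brlt_irrefl] at h2; simp at h2
    have hac : a ≠ c := by
      rintro rfl
      exact brlt_asymm h1 h2
    by_cases hp1 : a % 2 = b % 2
    · by_cases hp2 : b % 2 = c % 2
      · rw [brlt_same_par hab hp1] at h1
        rw [brlt_same_par hbc hp2] at h2
        rw [brlt_same_par hac (by omega)]
        exact ih (a/2) (b/2) (c/2) (by omega) h1 h2
      · -- a,b same parity; b,c differ. brlt b c = decide (b%2=1) = true so b odd, c even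
        rw [brlt_diff_par hp2] at h2
        simp at h2
        rw [brlt_diff_par (by omega)]
        simp; omega
    · rw [brlt_diff_par hp1] at h1
      simp at h1
      by_cases hp2 : b % 2 = c % 2
      · rw [brlt_diff_par (by omega)]
        simp; omega
      · rw [brlt_diff_par hp2] at h2
        simp at h2
        omega

lemma brlt_trans {a b c : ℕ} (h1 : brlt a b = true) (h2 : brlt b c = true) :
    brlt a c = true :=
  brlt_trans_aux (a+b+c) a b c le_rfl h1 h2

lemma brlt_total_aux : ∀ n a b, a + b ≤ n → a ≠ b → brlt a b = true ∨ brlt b a = true := by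
  intro n
  induction n with
  | zero => intro a b h hab; omega
  | succ n ih =>
    intro a b h hab
    by_cases hp : a % 2 = b % 2
    · have h2 : a/2 ≠ b/2 := by omega
      rcases ih (a/2) (b/2) (by omega) h2 with h' | h'
      · left; rw [brlt_same_par hab hp]; exact h'
      · right; rw [brlt_same_par (fun e => hab e.symm) hp.symm]; exact h'
    · rcases Nat.mod_two_eq_zero_or_one a with ha | ha
      · right; rw [brlt_diff_par (by omega)]; simp; omega
      · left; rw [brlt_diff_par hp]; simp; omega

lemma brlt_total {a b : ℕ} (hab : a ≠ b) : brlt a b = true ∨ brlt b a = true :=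
  brlt_total_aux (a+b) a b le_rfl hab

def brel (a b : ℕ) : Prop := a = b ∨ brlt a b = true

instance : DecidableRel brel := fun a b => by unfold brel; infer_instance

instance : IsTrans ℕ brel := ⟨by
  rintro a b c (rfl | h1) (rfl | h2)
  · exact Or.inl rfl
  · exact Or.inr h2
  · exact Or.inr h1
  · exact Or.inr (brlt_trans h1 h2)⟩

instance : IsAntisymm ℕ brel := ⟨by
  rintro a b (rfl | h1) (h2 | h2)
  · rfl
  · rfl
  · exact h2.symm
  · exact absurd h2 (fun h2 => brlt_asymm h1 h2)⟩

instance : IsTotal ℕ brel := ⟨by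
  intro a b
  by_cases hab : a = b
  · exact Or.inl (Or.inl hab)
  · rcases brlt_total hab with h | h
    · exact Or.inl (Or.inr h)
    · exact Or.inr (Or.inr h)⟩

/-! ### The construction -/

def BL (c : ℕ) : List ℕ := (Finset.Ico (8^c) (8^(c+1))).sort brel

lemma BL_length (c : ℕ) : (BL c).length = 7 * 8^c := by
  rw [BL, Finset.length_sort, Nat.card_Ico]
  have : (8:ℕ)^(c+1) = 8 * 8^c := by ring
  omega

lemma mem_BL {c v : ℕ} : v ∈ BL c ↔ 8^c ≤ v ∧ v < 8^(c+1) := by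
  rw [BL, Finset.mem_sort, Finset.mem_Ico]

def posZ (v : ℤ) : ℕ :=
  if v = 0 then 0
  else 2*8^(Nat.log 8 v.natAbs) - 1 + 2*((BL (Nat.log 8 v.natAbs)).idxOf v.natAbs)
    + (if 0 < v then 0 else 1)

lemma posZ_zero : posZ 0 = 0 := by rw [posZ]; simp

lemma self_mem_BL {v : ℕ} (hv : 1 ≤ v) : v ∈ BL (Nat.log 8 v) :=
  mem_BL.mpr ⟨Nat.pow_log_le_self 8 (by omega), Nat.lt_pow_succ_log_self (by norm_num) v⟩

lemma posZ_spec {v : ℤ} (hv : v ≠ 0) :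
    posZ v = 2*8^(Nat.log 8 v.natAbs) - 1 + 2*((BL (Nat.log 8 v.natAbs)).idxOf v.natAbs)
      + (if 0 < v then 0 else 1) := by
  rw [posZ, if_neg hv]

lemma posZ_bounds {v : ℤ} (hv : v ≠ 0) :
    2*8^(Nat.log 8 v.natAbs) - 1 ≤ posZ v ∧ posZ v ≤ 2*8^(Nat.log 8 v.natAbs + 1) - 2 := by
  have hm : v.natAbs ∈ BL (Nat.log 8 v.natAbs) := self_mem_BL (by omega)
  have hidx : (BL (Nat.log 8 v.natAbs)).idxOf v.natAbs < 7 * 8^(Nat.log 8 v.natAbs) := by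
    have := List.idxOf_lt_length_iff.mpr hm
    rwa [BL_length] at this
  rw [posZ_spec hv]
  have h8 : (8:ℕ)^(Nat.log 8 v.natAbs + 1) = 8 * 8^(Nat.log 8 v.natAbs) := by ring
  have hp : 0 < (8:ℕ)^(Nat.log 8 v.natAbs) := Nat.pow_pos (n := _) (by norm_num)
  split <;> omega

lemma posZ_pos {v : ℤ} (hv : v ≠ 0) : 1 ≤ posZ v := by
  have := (posZ_bounds hv).1
  have hp : 0 < (8:ℕ)^(Nat.log 8 v.natAbs) := Nat.pow_pos (n := _) (by norm_num)
  omega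

-- F1
lemma posZ_lt_of_blk_lt {x y : ℤ} (hx : x ≠ 0) (hy : y ≠ 0)
    (h : Nat.log 8 x.natAbs < Nat.log 8 y.natAbs) : posZ x < posZ y := by
  have h1 := (posZ_bounds hx).2
  have h2 := (posZ_bounds hy).1
  have h3 : (8:ℕ)^(Nat.log 8 x.natAbs + 1) ≤ 8^(Nat.log 8 y.natAbs) :=
    Nat.pow_le_pow_right (by norm_num) h
  have hp : 0 < (8:ℕ)^(Nat.log 8 x.natAbs) := Nat.pow_pos (n := _) (by norm_num)
  have h8 : (8:ℕ)^(Nat.log 8 x.natAbs + 1) = 8 * 8^(Nat.log 8 x.natAbs) := by ring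
  omega

-- F1'
lemma blk_le_of_posZ_lt {x y : ℤ} (hx : x ≠ 0) (hy : y ≠ 0) (h : posZ x < posZ y) :
    Nat.log 8 x.natAbs ≤ Nat.log 8 y.natAbs := by
  by_contra hc
  have := posZ_lt_of_blk_lt hy hx (by omega)
  omega

-- F2
lemma brlt_of_posZ_lt {x y : ℤ} (hx : x ≠ 0) (hy : y ≠ 0)
    (hb : Nat.log 8 x.natAbs = Nat.log 8 y.natAbs) (hne : x.natAbs ≠ y.natAbs)
    (h : posZ x < posZ y) : brlt x.natAbs y.natAbs = true := by
  set c := Nat.log 8 x.natAbs with hc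
  have hmx : x.natAbs ∈ BL c := self_mem_BL (by omega)
  have hmy : y.natAbs ∈ BL c := by rw [hb]; exact self_mem_BL (by omega)
  set ix := (BL c).idxOf x.natAbs with hix
  set iy := (BL c).idxOf y.natAbs with hiy
  have hxl : ix < (BL c).length := List.idxOf_lt_length_iff.mpr hmx
  have hyl : iy < (BL c).length := List.idxOf_lt_length_iff.mpr hmy
  have hilt : ix < iy := by
    rw [posZ_spec hx, posZ_spec hy, ← hb, ← hc, ← hix, ← hiy] at h
    have hip : ix ≠ iy := by
      intro he
      apply hne
      have h1 : (BL c).get ⟨ix, hxl⟩ = x.natAbs := List.idxOf_get hxl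
      have h2 : (BL c).get ⟨iy, hyl⟩ = y.natAbs := List.idxOf_get hyl
      rw [← h1, ← h2]
      congr 1
      exact Fin.ext he
    have hp : 0 < (8:ℕ)^c := Nat.pow_pos (n := _) (by norm_num)
    by_cases h' : (0:ℤ) < x <;> by_cases h'' : (0:ℤ) < y <;>
      simp only [h', h'', if_true, if_false] at h <;> omega
  have hsorted : List.Pairwise brel (BL c) := Finset.pairwise_sort _ _
  have hrel : brel ((BL c).get ⟨ix, hxl⟩) ((BL c).get ⟨iy, hyl⟩) :=
    List.Pairwise.rel_get_of_lt hsorted (by exact hilt)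
  rw [List.idxOf_get hxl, List.idxOf_get hyl] at hrel
  rcases hrel with he | hb'
  · exact absurd he hne
  · exact hb'

lemma posZ_injective : Function.Injective posZ := by
  intro a b h
  by_cases ha : a = 0
  · by_cases hb : b = 0
    · rw [ha, hb]
    · rw [ha, posZ_zero] at h
      have := posZ_pos hb
      omega
  · by_cases hb : b = 0
    · rw [hb, posZ_zero] at h
      have := posZ_pos ha
      omega
    · have hblk : Nat.log 8 a.natAbs = Nat.log 8 b.natAbs := by
        by_contra hc
        rcases Nat.lt_or_ge (Nat.log 8 a.natAbs) (Nat.log 8 b.natAbs) with h' | h'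
        · have := posZ_lt_of_blk_lt ha hb h'
          omega
        · have := posZ_lt_of_blk_lt hb ha (by omega)
          omega
      set c := Nat.log 8 a.natAbs with hc
      have hma : a.natAbs ∈ BL c := self_mem_BL (by omega)
      have hmb : b.natAbs ∈ BL c := by rw [hblk]; exact self_mem_BL (by omega)
      rw [posZ_spec ha, posZ_spec hb, ← hblk, ← hc] at h
      have hp : 0 < (8:ℕ)^c := Nat.pow_pos (n := _) (by norm_num)
      have habs : a.natAbs = b.natAbs ∧ ((0:ℤ) < a ↔ (0:ℤ) < b) := by
        have hidx : (BL c).idxOf a.natAbs = (BL c).idxOf b.natAbs ∧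
            ((0:ℤ) < a ↔ (0:ℤ) < b) := by
          by_cases h' : (0:ℤ) < a <;> by_cases h'' : (0:ℤ) < b <;>
            simp only [h', h'', if_true, if_false] at h
          · exact ⟨by omega, by simp [h', h'']⟩
          · exact absurd h (by omega)
          · exact absurd h (by omega)
          · exact ⟨by omega, by simp [h', h'']⟩
        exact ⟨(List.idxOf_inj hma).mp hidx.1, hidx.2⟩
      obtain ⟨h1, h2⟩ := habs
      omega

lemma posZ_surjective : Function.Surjective posZ := by
  intro n
  by_cases hn : n = 0
  · exact ⟨0, by rw [posZ_zero, hn]⟩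
  · set q := (n+1)/2 with hq
    have hq1 : 1 ≤ q := by omega
    set c := Nat.log 8 q with hc
    have hql : 8^c ≤ q := Nat.pow_log_le_self 8 (by omega)
    have hqu : q < 8^(c+1) := Nat.lt_pow_succ_log_self (by norm_num) q
    have hn1 : 2*8^c - 1 ≤ n := by omega
    have hn2 : n ≤ 2*8^(c+1) - 2 := by omega
    set m := n - (2*8^c - 1) with hm
    have hp : 0 < (8:ℕ)^c := Nat.pow_pos (n := _) (by norm_num)
    have h8 : (8:ℕ)^(c+1) = 8 * 8^c := by ring
    have hi : m/2 < (BL c).length := by rw [BL_length]; omega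
    set v := (BL c).get ⟨m/2, hi⟩ with hv
    have hvm : v ∈ BL c := List.get_mem _ _
    have hvb := mem_BL.mp hvm
    have hvc : Nat.log 8 v = c := Nat.log_eq_of_pow_le_of_lt_pow hvb.1 hvb.2
    have hvi : (BL c).idxOf v = m/2 := by
      have hnd : (BL c).Nodup := Finset.sort_nodup _ _
      have h1 : (BL c).get ⟨(BL c).idxOf v, List.idxOf_lt_length_iff.mpr hvm⟩ = v :=
        List.idxOf_get _
      have := List.Nodup.get_inj_iff hnd (i := ⟨(BL c).idxOf v, List.idxOf_lt_length_iff.mpr hvm⟩)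
        (j := ⟨m/2, hi⟩)
      rw [h1] at this
      have h2 := this.mp hv.symm
      exact congrArg Fin.val h2
  
    have hv1 : 1 ≤ v := by omega
    rcases Nat.even_or_odd m with hpar | hpar
    · refine ⟨(v : ℤ), ?_⟩
      have hne : (v:ℤ) ≠ 0 := by exact_mod_cast (by omega : v ≠ 0)
      rw [posZ_spec hne]
      have hna : (v:ℤ).natAbs = v := Int.natAbs_natCast v
      rw [hna, hvc, hvi, if_pos (by exact_mod_cast hv1)]
      have := Nat.even_iff.mp hpar
      omega
    · refine ⟨-(v : ℤ), ?_⟩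
      have hne : -(v:ℤ) ≠ 0 := by
        simp only [ne_eq, neg_eq_zero]
        exact_mod_cast (by omega : v ≠ 0)
      rw [posZ_spec hne]
      have hna : (-(v:ℤ)).natAbs = v := by simp
      rw [hna, hvc, hvi, if_neg (by omega)]
      have := Nat.odd_iff.mp hpar
      omega

/-! ### helpers -/

lemma natAbs_smul {s : ℤ} (hs : s = 1 ∨ s = -1) (u : ℕ) : (s*(u:ℤ)).natAbs = u := by
  rcases hs with rfl | rfl <;> simp

lemma smul_ne {s : ℤ} (hs : s = 1 ∨ s = -1) {u : ℕ} (hu : 1 ≤ u) : s*(u:ℤ) ≠ 0 := by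
  rcases hs with rfl | rfl <;> simp <;> omega

lemma blk_le_of_pos {s s' : ℤ} (hs : s = 1 ∨ s = -1) (hs' : s' = 1 ∨ s' = -1)
    {u w : ℕ} (hu : 1 ≤ u) (hw : 1 ≤ w) (h : posZ (s*u) < posZ (s'*w)) :
    Nat.log 8 u ≤ Nat.log 8 w := by
  have := blk_le_of_posZ_lt (smul_ne hs hu) (smul_ne hs' hw) h
  rwa [natAbs_smul hs, natAbs_smul hs'] at this

lemma brlt_of_pos {s s' : ℤ} (hs : s = 1 ∨ s = -1) (hs' : s' = 1 ∨ s' = -1)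
    {u w : ℕ} (hu : 1 ≤ u) (hw : 1 ≤ w) (hb : Nat.log 8 u = Nat.log 8 w)
    (hne : u ≠ w) (h : posZ (s*u) < posZ (s'*w)) : brlt u w = true := by
  have := brlt_of_posZ_lt (smul_ne hs hu) (smul_ne hs' hw)
    (by rwa [natAbs_smul hs, natAbs_smul hs'])
    (by rwa [natAbs_smul hs, natAbs_smul hs']) h
  rwa [natAbs_smul hs, natAbs_smul hs'] at this

lemma le_log8 {c v : ℕ} (h : 8^c ≤ v) : c ≤ Nat.log 8 v := by
  have hv : v ≠ 0 := by have : 0 < (8:ℕ)^c := Nat.pow_pos (n := _) (by norm_num); omega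
  exact (Nat.le_log_iff_pow_le (by norm_num) hv).mpr h

lemma log8_lb {v : ℕ} : 8^(Nat.log 8 v) ≤ v ∨ v = 0 := by
  by_cases h : v = 0
  · exact Or.inr h
  · exact Or.inl (Nat.pow_log_le_self 8 h)

lemma log8_ub (v : ℕ) : v < 8^(Nat.log 8 v + 1) := Nat.lt_pow_succ_log_self (by norm_num) v

lemma log8_4mul {v w : ℕ} (hw : 1 ≤ w) (h : v ≤ 4*w) : Nat.log 8 v ≤ Nat.log 8 w + 1 := by
  by_cases hv : v = 0
  · rw [hv]; simp
  · have h1 : w < 8^(Nat.log 8 w + 1) := log8_ub w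
    have h2 : v < 8^(Nat.log 8 w + 2) := by
      have : (8:ℕ)^(Nat.log 8 w + 2) = 8 * 8^(Nat.log 8 w + 1) := by ring
      omega
    have := Nat.log_lt_of_lt_pow hv h2
    omega

lemma desc3_kill {s : ℤ} (hs : s = 1 ∨ s = -1) {x δ : ℕ} (hx : 1 ≤ x) (hδ : 1 ≤ δ)
    (h1 : posZ (s*(x+2*δ)) < posZ (s*(x+δ))) (h2 : posZ (s*(x+δ)) < posZ (s*x)) : False := by
  have e1 : Nat.log 8 (x+2*δ) ≤ Nat.log 8 (x+δ) := blk_le_of_pos hs hs (by omega) (by omega) h1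
  have e2 : Nat.log 8 (x+δ) ≤ Nat.log 8 x := blk_le_of_pos hs hs (by omega) (by omega) h2
  have m1 : Nat.log 8 (x+δ) ≤ Nat.log 8 (x+2*δ) := Nat.log_mono_right (by omega)
  have m2 : Nat.log 8 x ≤ Nat.log 8 (x+δ) := Nat.log_mono_right (by omega)
  have b1 : brlt (x+2*δ) (x+δ) = true :=
    brlt_of_pos hs hs (by omega) (by omega) (by omega) (by omega) h1
  have b2 : brlt (x+δ) x = true :=
    brlt_of_pos hs hs (by omega) (by omega) (by omega) (by omega) h2
  have hxx : x + 2*δ = x + δ + δ := by ring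
  rw [hxx] at b1
  exact no_desc3 (by omega) b1 b2

lemma asc3_kill {s : ℤ} (hs : s = 1 ∨ s = -1) {x δ : ℕ} (hx : 1 ≤ x) (hδ : 1 ≤ δ)
    (hb1 : Nat.log 8 x = Nat.log 8 (x+δ)) (hb2 : Nat.log 8 (x+2*δ) = Nat.log 8 (x+δ))
    (h1 : posZ (s*x) < posZ (s*(x+δ))) (h2 : posZ (s*(x+δ)) < posZ (s*(x+2*δ))) : False := by
  have b1 : brlt x (x+δ) = true :=
    brlt_of_pos hs hs (by omega) (by omega) hb1 (by omega) h1
  have b2 : brlt (x+δ) (x+2*δ) = true :=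
    brlt_of_pos hs hs (by omega) (by omega) (by omega) (by omega) h2
  have hxx : x + 2*δ = x + δ + δ := by ring
  rw [hxx] at b2
  exact no_asc3 (by omega) b1 b2

lemma window {s : ℤ} (hs : s = 1 ∨ s = -1) {u δ : ℕ} (hu : 1 ≤ u) (hδ : 1 ≤ δ)
    (h1 : posZ (s*u) < posZ (s*(u+δ))) (h2 : posZ (s*(u+δ)) < posZ (s*(u+2*δ)))
    (h3 : posZ (s*(u+2*δ)) < posZ (s*(u+3*δ))) (h4 : posZ (s*(u+3*δ)) < posZ (s*(u+4*δ))) :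
    Nat.log 8 u < Nat.log 8 (u+δ) ∧ Nat.log 8 (u+2*δ) = Nat.log 8 (u+δ) ∧
      Nat.log 8 (u+3*δ) = Nat.log 8 (u+δ) + 1 := by
  set c := Nat.log 8 (u+δ) with hc
  have m0 : Nat.log 8 u ≤ c := blk_le_of_pos hs hs (by omega) (by omega) h1
  have m1 : c ≤ Nat.log 8 (u+2*δ) := blk_le_of_pos hs hs (by omega) (by omega) h2
  have m2 : Nat.log 8 (u+2*δ) ≤ Nat.log 8 (u+3*δ) := blk_le_of_pos hs hs (by omega) (by omega) h3
  have m3 : Nat.log 8 (u+3*δ) ≤ Nat.log 8 (u+4*δ) := blk_le_of_pos hs hs (by omega) (by omega) h4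
  have g : Nat.log 8 (u+4*δ) ≤ c + 1 := log8_4mul (by omega) (by omega)
  -- case on log8 (u+2δ)
  rcases (by omega : Nat.log 8 (u+2*δ) = c ∨ Nat.log 8 (u+2*δ) = c + 1) with h23 | h23
  · rcases (by omega : Nat.log 8 (u+3*δ) = c ∨ Nat.log 8 (u+3*δ) = c + 1) with h34 | h34
    · exfalso
      have e1 : u+2*δ = (u+δ)+δ := by ring
      have e2 : u+3*δ = (u+δ)+2*δ := by ring
      refine asc3_kill hs (x := u+δ) (δ := δ) (by omega) (by omega) ?_ ?_ ?_ ?_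
      · rw [← e1, h23]
      · rw [← e2, ← e1, h34, h23]
      · push_cast; ring_nf; ring_nf at h2; exact h2
      · push_cast; ring_nf; ring_nf at h3; exact h3
    · refine ⟨?_, h23, h34⟩
      by_contra hcon
      have h0 : Nat.log 8 u = c := by omega
      exact asc3_kill hs (x := u) (δ := δ) (by omega) (by omega) h0 (by omega) h1 h2
  · exfalso
    have h34 : Nat.log 8 (u+3*δ) = c + 1 := by omega
    have h45 : Nat.log 8 (u+4*δ) = c + 1 := by omega
    have e1 : u+3*δ = (u+2*δ)+δ := by ring
    have e2 : u+4*δ = (u+2*δ)+2*δ := by ring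
    refine asc3_kill hs (x := u+2*δ) (δ := δ) (by omega) (by omega) ?_ ?_ ?_ ?_
    · rw [← e1, h34, h23]
    · rw [← e2, ← e1, h45, h34]
    · push_cast; ring_nf; ring_nf at h3; exact h3
    · push_cast; ring_nf; ring_nf at h4; exact h4

lemma posZ_congr_lt {a b a' b' : ℤ} (ha : a = a') (hb : b = b') (h : posZ a < posZ b) :
    posZ a' < posZ b' := by rw [← ha, ← hb]; exact h

lemma six_kill {s : ℤ} (hs : s = 1 ∨ s = -1) {u δ : ℕ} (hu : 1 ≤ u) (hδ : 1 ≤ δ)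
    (h1 : posZ (s*u) < posZ (s*(u+δ))) (h2 : posZ (s*(u+δ)) < posZ (s*(u+2*δ)))
    (h3 : posZ (s*(u+2*δ)) < posZ (s*(u+3*δ))) (h4 : posZ (s*(u+3*δ)) < posZ (s*(u+4*δ)))
    (h5 : posZ (s*(u+4*δ)) < posZ (s*(u+5*δ))) : False := by
  obtain ⟨_, w12, w13⟩ := window hs hu hδ h1 h2 h3 h4
  have h2' : posZ (s*((u+δ:ℕ):ℤ)) < posZ (s*(((u+δ:ℕ):ℤ)+δ)) :=
    posZ_congr_lt (by push_cast; ring) (by push_cast; ring) h2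
  have h3' : posZ (s*(((u+δ:ℕ):ℤ)+δ)) < posZ (s*(((u+δ:ℕ):ℤ)+2*δ)) :=
    posZ_congr_lt (by push_cast; ring) (by push_cast; ring) h3
  have h4' : posZ (s*(((u+δ:ℕ):ℤ)+2*δ)) < posZ (s*(((u+δ:ℕ):ℤ)+3*δ)) :=
    posZ_congr_lt (by push_cast; ring) (by push_cast; ring) h4
  have h5' : posZ (s*(((u+δ:ℕ):ℤ)+3*δ)) < posZ (s*(((u+δ:ℕ):ℤ)+4*δ)) :=
    posZ_congr_lt (by push_cast; ring) (by push_cast; ring) h5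
  obtain ⟨_, w22, _⟩ := window hs (u := u+δ) (by omega) hδ h2' h3' h4' h5'
  have e1 : u+δ+2*δ = u+3*δ := by ring
  have e2 : u+δ+δ = u+2*δ := by ring
  rw [e1, e2] at w22
  omega

lemma five_kill_zero {s : ℤ} (hs : s = 1 ∨ s = -1) {δ : ℕ} (hδ : 1 ≤ δ)
    (h1 : posZ (s*δ) < posZ (s*(δ+δ))) (h2 : posZ (s*(δ+δ)) < posZ (s*(δ+2*δ)))
    (h3 : posZ (s*(δ+2*δ)) < posZ (s*(δ+3*δ))) (h4 : posZ (s*(δ+3*δ)) < posZ (s*(δ+4*δ))) :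
    False := by
  have h1' : posZ (s*(δ:ℤ)) < posZ (s*((δ:ℤ)+δ)) := h1
  obtain ⟨lt, _, w13⟩ := window hs (u := δ) hδ hδ h1' h2 h3 h4
  set c := Nat.log 8 (δ+δ) with hc
  have hδM : δ < 8^c := by
    have hub : δ < 8^(Nat.log 8 δ + 1) := log8_ub δ
    have : (8:ℕ)^(Nat.log 8 δ + 1) ≤ 8^c := Nat.pow_le_pow_right (by norm_num) (by omega)
    omega
  have hlb : 8^(c+1) ≤ δ+3*δ := by
    have := Nat.pow_log_le_self 8 (x := δ+3*δ) (by omega)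
    rw [w13] at this
    exact this
  have h8 : (8:ℕ)^(c+1) = 8 * 8^c := by ring
  omega

lemma five_kill_neg {s : ℤ} (hs : s = 1 ∨ s = -1) {u δ B : ℕ}
    (hu : 1 ≤ u) (hB : 1 ≤ B) (hsum : B + u = δ)
    (hp0 : posZ (-s*(B:ℤ)) < posZ (s*u))
    (h1 : posZ (s*u) < posZ (s*(u+δ))) (h2 : posZ (s*(u+δ)) < posZ (s*(u+2*δ)))
    (h3 : posZ (s*(u+2*δ)) < posZ (s*(u+3*δ))) (h4 : posZ (s*(u+3*δ)) < posZ (s*(u+4*δ))) :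
    False := by
  have hδ : 1 ≤ δ := by omega
  obtain ⟨lt, _, w13⟩ := window hs hu hδ h1 h2 h3 h4
  set c := Nat.log 8 (u+δ) with hc
  have huM : u < 8^c := by
    have hub : u < 8^(Nat.log 8 u + 1) := log8_ub u
    have : (8:ℕ)^(Nat.log 8 u + 1) ≤ 8^c := Nat.pow_le_pow_right (by norm_num) (by omega)
    omega
  have hlb : 8^(c+1) ≤ u+3*δ := by
    have := Nat.pow_log_le_self 8 (x := u+3*δ) (by omega)
    rw [w13] at this
    exact this
  have h8 : (8:ℕ)^(c+1) = 8 * 8^c := by ring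
  -- 3B = 3δ - 3u ≥ 8*8^c - 4u > 4*8^c  so  B > 8^c
  have hBM : 8^c ≤ B := by omega
  have hcB : c ≤ Nat.log 8 B := le_log8 hBM
  have hs' : -s = 1 ∨ -s = -1 := by
    rcases hs with rfl | rfl
    · right; norm_num
    · left; norm_num
  have := blk_le_of_pos hs' hs hB hu hp0
  omega

lemma main_kill {sB sw : ℤ} (hsB : sB = 1 ∨ sB = -1) (hsw : sw = 1 ∨ sw = -1)
    {B w1 δ : ℕ} (hB : 1 ≤ B) (hw1 : 1 ≤ w1) (hδ : B + w1 = δ)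
    (hp1 : posZ (sB*((B:ℤ)+δ)) < posZ (sB*B))
    (hp2 : posZ (sB*(B:ℤ)) < posZ (sw*w1))
    (hp3 : posZ (sw*(w1:ℤ)) < posZ (sw*((w1:ℤ)+δ)))
    (hp4 : posZ (sw*((w1:ℤ)+δ)) < posZ (sw*((w1:ℤ)+2*δ)))
    (hp5 : posZ (sw*((w1:ℤ)+2*δ)) < posZ (sw*((w1:ℤ)+3*δ))) : False := by
  have hδ1 : 1 ≤ δ := by omega
  -- blocks of A = B+δ and B agree, and brlt (B+δ) B
  have hp1' : posZ (sB*((B+δ:ℕ):ℤ)) < posZ (sB*B) :=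
    posZ_congr_lt (by push_cast; ring) rfl hp1
  have hABblk : Nat.log 8 (B+δ) = Nat.log 8 B := by
    have hle := blk_le_of_pos hsB hsB (by omega) hB hp1'
    have := Nat.log_mono_right (show B ≤ B+δ by omega) (b := 8)
    omega
  have hbrAB : brlt (B+δ) B = true :=
    brlt_of_pos hsB hsB (by omega) hB hABblk (by omega) hp1'
  have hBw : Nat.log 8 B ≤ Nat.log 8 w1 := blk_le_of_pos hsB hsw hB hw1 hp2
  -- blocks of w-chain
  have hp3' : posZ (sw*((w1:ℤ))) < posZ (sw*((w1+δ:ℕ):ℤ)) :=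
    posZ_congr_lt rfl (by push_cast; ring) hp3
  have hp4' : posZ (sw*((w1+δ:ℕ):ℤ)) < posZ (sw*((w1+2*δ:ℕ):ℤ)) :=
    posZ_congr_lt (by push_cast; ring) (by push_cast; ring) hp4
  have hp5' : posZ (sw*((w1+2*δ:ℕ):ℤ)) < posZ (sw*((w1+3*δ:ℕ):ℤ)) :=
    posZ_congr_lt (by push_cast; ring) (by push_cast; ring) hp5
  have m1 : Nat.log 8 w1 ≤ Nat.log 8 (w1+δ) := blk_le_of_pos hsw hsw hw1 (by omega) hp3'
  have m2 : Nat.log 8 (w1+δ) ≤ Nat.log 8 (w1+2*δ) :=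
    blk_le_of_pos hsw hsw (by omega) (by omega) hp4'
  have m3 : Nat.log 8 (w1+2*δ) ≤ Nat.log 8 (w1+3*δ) :=
    blk_le_of_pos hsw hsw (by omega) (by omega) hp5'
  have g : Nat.log 8 (w1+3*δ) ≤ Nat.log 8 (w1+δ) + 1 := log8_4mul (by omega) (by omega)
  set e2 := Nat.log 8 (w1+δ) with he2
  -- notation: e1 = log w1, e3 = log (w1+2δ), e4 = log (w1+3δ)
  rcases (by omega : Nat.log 8 (w1+2*δ) = e2 ∨ Nat.log 8 (w1+2*δ) = e2 + 1) with h3e | h3e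
  · rcases (by omega : Nat.log 8 (w1+3*δ) = e2 ∨ Nat.log 8 (w1+3*δ) = e2 + 1) with h4e | h4e
    · -- w2,w3,w4 same block: ascending 3-AP
      refine asc3_kill hsw (x := w1+δ) (δ := δ) (by omega) (by omega) ?_ ?_ ?_ ?_
      · have e1 : w1+δ+δ = w1+2*δ := by ring
        rw [e1]; omega
      · have e1 : w1+δ+2*δ = w1+3*δ := by ring
        have e2' : w1+δ+δ = w1+2*δ := by ring
        rw [e1, e2']; omega
      · exact posZ_congr_lt (by push_cast; ring) (by push_cast; ring) hp4
      · exact posZ_congr_lt (by push_cast; ring) (by push_cast; ring) hp5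
    · -- e3 = e2, e4 = e2+1 : case α
      rcases (by omega : Nat.log 8 w1 = e2 ∨ Nat.log 8 w1 < e2) with h1e | h1e
      · -- w1,w2,w3 same block ascending
        refine asc3_kill hsw (x := w1) (δ := δ) (by omega) (by omega) ?_ ?_ hp3' ?_
        · omega
        · have e1 : w1+2*δ = w1+2*δ := rfl
          omega
        · exact posZ_congr_lt (by push_cast; ring) (by push_cast; ring) hp4
      · -- w1 in earlier block: numeric kill using B
        exfalso
        have hw1N : w1 < 8^e2 := by
          have hub : w1 < 8^(Nat.log 8 w1 + 1) := log8_ub w1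
          have : (8:ℕ)^(Nat.log 8 w1 + 1) ≤ 8^e2 := Nat.pow_le_pow_right (by norm_num) (by omega)
          omega
        have hlb : 8^(e2+1) ≤ w1+3*δ := by
          have := Nat.pow_log_le_self 8 (x := w1+3*δ) (by omega)
          rw [h4e] at this
          exact this
        have h8 : (8:ℕ)^(e2+1) = 8 * 8^e2 := by ring
        have hBM : 8^e2 ≤ B := by omega
        have hcB : e2 ≤ Nat.log 8 B := le_log8 hBM
        omega
  · -- e3 = e2+1, hence e4 = e2+1
    have h4e : Nat.log 8 (w1+3*δ) = e2 + 1 := by omega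
    rcases (by omega : Nat.log 8 w1 = e2 ∨ Nat.log 8 w1 < e2) with h1e | h1e
    · -- case β : w1, w2 in same block
      have hbrw : brlt w1 (w1+δ) = true :=
        brlt_of_pos hsw hsw hw1 (by omega) (by omega) (by omega) hp3'
      rcases (by omega : Nat.log 8 B = Nat.log 8 w1 ∨ Nat.log 8 B < Nat.log 8 w1) with hBe | hBe
      · by_cases hBw1 : B = w1
        · -- then brlt (B+δ) B and brlt B (B+δ) both hold
          rw [← hBw1] at hbrw
          exact brlt_asymm hbrw hbrAB
        · have hbrBw : brlt B w1 = true := brlt_of_pos hsB hsw hB hw1 hBe hBw1 hp2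
          exact no_beta (by omega) hδ hbrAB hbrw hbrBw
      · -- B in earlier block than w1 : then A = B + δ > w1 ≥ 8^(log w1), contradiction
        have hBN : B < 8^(Nat.log 8 w1) := by
          have hub : B < 8^(Nat.log 8 B + 1) := log8_ub B
          have : (8:ℕ)^(Nat.log 8 B + 1) ≤ 8^(Nat.log 8 w1) :=
            Nat.pow_le_pow_right (by norm_num) (by omega)
          omega
        have hw1lb : 8^(Nat.log 8 w1) ≤ w1 := Nat.pow_log_le_self 8 (by omega)
        have hAlb : 8^(Nat.log 8 w1) ≤ B+δ := by omega
        have := le_log8 hAlb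
        omega
    · -- case γ : w1 earlier block, w3 ≥ 8N
      have hw1N : w1 < 8^e2 := by
        have hub : w1 < 8^(Nat.log 8 w1 + 1) := log8_ub w1
        have : (8:ℕ)^(Nat.log 8 w1 + 1) ≤ 8^e2 := Nat.pow_le_pow_right (by norm_num) (by omega)
        omega
      have hlb : 8^(e2+1) ≤ w1+2*δ := by
        have := Nat.pow_log_le_self 8 (x := w1+2*δ) (by omega)
        rw [h3e] at this
        exact this
      have h8 : (8:ℕ)^(e2+1) = 8 * 8^e2 := by ring
      have hBM : 8^e2 ≤ B := by omega
      have hcB : e2 ≤ Nat.log 8 B := le_log8 hBM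
      omega

theorem no_AP6 (v0 d : ℤ) (hd : d ≠ 0)
    (h0 : posZ v0 < posZ (v0+d)) (h1 : posZ (v0+d) < posZ (v0+2*d))
    (h2 : posZ (v0+2*d) < posZ (v0+3*d)) (h3 : posZ (v0+3*d) < posZ (v0+4*d))
    (h4 : posZ (v0+4*d) < posZ (v0+5*d)) : False := by
  rcases hd.lt_or_gt with hneg | hpos
  · -- d < 0 : values strictly decreasing
    have hv3 : v0 + 3*d < 0 := by
      by_contra hc
      push_neg at hc
      exact desc3_kill (s := 1) (Or.inl rfl) (x := (v0+2*d).toNat) (δ := (-d).toNat)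
        (by omega) (by omega)
        (posZ_congr_lt (by omega) (by omega) h0)
        (posZ_congr_lt (by omega) (by omega) h1)
    rcases lt_trichotomy (v0+d) 0 with hv1 | hv1 | hv1
    · rcases lt_trichotomy v0 0 with hv0 | hv0 | hv0
      · exact six_kill (s := -1) (Or.inr rfl) (u := (-v0).toNat) (δ := (-d).toNat)
          (by omega) (by omega)
          (posZ_congr_lt (by omega) (by omega) h0)
          (posZ_congr_lt (by omega) (by omega) h1)
          (posZ_congr_lt (by omega) (by omega) h2)
          (posZ_congr_lt (by omega) (by omega) h3)
          (posZ_congr_lt (by omega) (by omega) h4)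
      · exact five_kill_zero (s := -1) (Or.inr rfl) (δ := (-d).toNat) (by omega)
          (posZ_congr_lt (by omega) (by omega) h1)
          (posZ_congr_lt (by omega) (by omega) h2)
          (posZ_congr_lt (by omega) (by omega) h3)
          (posZ_congr_lt (by omega) (by omega) h4)
      · exact five_kill_neg (s := -1) (Or.inr rfl) (u := (-(v0+d)).toNat)
          (B := v0.toNat) (δ := (-d).toNat) (by omega) (by omega) (by omega)
          (posZ_congr_lt (by omega) (by omega) h0)
          (posZ_congr_lt (by omega) (by omega) h1)
          (posZ_congr_lt (by omega) (by omega) h2)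
          (posZ_congr_lt (by omega) (by omega) h3)
          (posZ_congr_lt (by omega) (by omega) h4)
    · rw [hv1, posZ_zero] at h0; omega
    · rcases lt_trichotomy (v0+2*d) 0 with hv2 | hv2 | hv2
      · exact main_kill (sB := 1) (sw := -1) (Or.inl rfl) (Or.inr rfl)
          (B := (v0+d).toNat) (w1 := (-(v0+2*d)).toNat) (δ := (-d).toNat)
          (by omega) (by omega) (by omega)
          (posZ_congr_lt (by omega) (by omega) h0)
          (posZ_congr_lt (by omega) (by omega) h1)
          (posZ_congr_lt (by omega) (by omega) h2)
          (posZ_congr_lt (by omega) (by omega) h3)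
          (posZ_congr_lt (by omega) (by omega) h4)
      · rw [hv2, posZ_zero] at h1; omega
      · exact desc3_kill (s := 1) (Or.inl rfl) (x := (v0+2*d).toNat) (δ := (-d).toNat)
          (by omega) (by omega)
          (posZ_congr_lt (by omega) (by omega) h0)
          (posZ_congr_lt (by omega) (by omega) h1)
  · -- 0 < d : values strictly increasing
    have hv3 : 0 < v0 + 3*d := by
      by_contra hc
      push_neg at hc
      exact desc3_kill (s := -1) (Or.inr rfl) (x := (-(v0+2*d)).toNat) (δ := d.toNat)
        (by omega) (by omega)
        (posZ_congr_lt (by omega) (by omega) h0)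
        (posZ_congr_lt (by omega) (by omega) h1)
    rcases lt_trichotomy (v0+d) 0 with hv1 | hv1 | hv1
    · rcases lt_trichotomy (v0+2*d) 0 with hv2 | hv2 | hv2
      · exact desc3_kill (s := -1) (Or.inr rfl) (x := (-(v0+2*d)).toNat) (δ := d.toNat)
          (by omega) (by omega)
          (posZ_congr_lt (by omega) (by omega) h0)
          (posZ_congr_lt (by omega) (by omega) h1)
      · rw [hv2, posZ_zero] at h1; omega
      · exact main_kill (sB := -1) (sw := 1) (Or.inr rfl) (Or.inl rfl)
          (B := (-(v0+d)).toNat) (w1 := (v0+2*d).toNat) (δ := d.toNat)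
          (by omega) (by omega) (by omega)
          (posZ_congr_lt (by omega) (by omega) h0)
          (posZ_congr_lt (by omega) (by omega) h1)
          (posZ_congr_lt (by omega) (by omega) h2)
          (posZ_congr_lt (by omega) (by omega) h3)
          (posZ_congr_lt (by omega) (by omega) h4)
    · rw [hv1, posZ_zero] at h0; omega
    · rcases lt_trichotomy v0 0 with hv0 | hv0 | hv0
      · exact five_kill_neg (s := 1) (Or.inl rfl) (u := (v0+d).toNat)
          (B := (-v0).toNat) (δ := d.toNat) (by omega) (by omega) (by omega)
          (posZ_congr_lt (by omega) (by omega) h0)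
          (posZ_congr_lt (by omega) (by omega) h1)
          (posZ_congr_lt (by omega) (by omega) h2)
          (posZ_congr_lt (by omega) (by omega) h3)
          (posZ_congr_lt (by omega) (by omega) h4)
      · exact five_kill_zero (s := 1) (Or.inl rfl) (δ := d.toNat) (by omega)
          (posZ_congr_lt (by omega) (by omega) h1)
          (posZ_congr_lt (by omega) (by omega) h2)
          (posZ_congr_lt (by omega) (by omega) h3)
          (posZ_congr_lt (by omega) (by omega) h4)
      · exact six_kill (s := 1) (Or.inl rfl) (u := v0.toNat) (δ := d.toNat)
          (by omega) (by omega)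
          (posZ_congr_lt (by omega) (by omega) h0)
          (posZ_congr_lt (by omega) (by omega) h1)
          (posZ_congr_lt (by omega) (by omega) h2)
          (posZ_congr_lt (by omega) (by omega) h3)
          (posZ_congr_lt (by omega) (by omega) h4)


/-- A sequence `f : ℕ → ℤ` contains a `k`-term arithmetic progression: there are
indices `i 0 < i 1 < ⋯ < i (k-1)` and a nonzero integer `d` with consecutive
differences all equal to `d`. -/
def ContainsAPZ (f : ℕ → ℤ) (k : ℕ) : Prop :=
  ∃ (i : ℕ → ℕ) (d : ℤ), d ≠ 0 ∧ (∀ a b, a < b → b < k → i a < i b) ∧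
    ∀ j, j + 1 < k → f (i (j + 1)) = f (i j) + d

/-- For every `k ≥ 6` there exists a permutation of the integers avoiding
`k`-term arithmetic progressions. -/
theorem exists_perm_int_avoiding_kAP (k : ℕ) (hk : 6 ≤ k) :
    ∃ f : ℕ → ℤ, Function.Bijective f ∧ ¬ ContainsAPZ f k := by
  have hbij : Function.Bijective posZ := ⟨posZ_injective, posZ_surjective⟩
  set E : ℤ ≃ ℕ := Equiv.ofBijective posZ hbij with hE
  refine ⟨fun n => E.symm n, E.symm.bijective, ?_⟩
  rintro ⟨i, d, hd, hinc, hstep⟩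
  have hposf : ∀ n, posZ (E.symm n) = n := fun n => E.apply_symm_apply n
  have hv1 : E.symm (i 1) = E.symm (i 0) + d := hstep 0 (by omega)
  have hv2 : E.symm (i 2) = E.symm (i 0) + 2*d := by
    have h : E.symm (i 2) = E.symm (i 1) + d := hstep 1 (by omega)
    rw [hv1] at h; omega
  have hv3 : E.symm (i 3) = E.symm (i 0) + 3*d := by
    have h : E.symm (i 3) = E.symm (i 2) + d := hstep 2 (by omega)
    rw [hv2] at h; omega
  have hv4 : E.symm (i 4) = E.symm (i 0) + 4*d := by
    have h : E.symm (i 4) = E.symm (i 3) + d := hstep 3 (by omega)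
    rw [hv3] at h; omega
  have hv5 : E.symm (i 5) = E.symm (i 0) + 5*d := by
    have h : E.symm (i 5) = E.symm (i 4) + d := hstep 4 (by omega)
    rw [hv4] at h; omega
  have hp0 : posZ (E.symm (i 0)) < posZ (E.symm (i 0) + d) := by
    rw [← hv1, hposf, hposf]; exact hinc 0 1 (by omega) (by omega)
  have hp1 : posZ (E.symm (i 0) + d) < posZ (E.symm (i 0) + 2*d) := by
    rw [← hv1, ← hv2, hposf, hposf]; exact hinc 1 2 (by omega) (by omega)
  have hp2 : posZ (E.symm (i 0) + 2*d) < posZ (E.symm (i 0) + 3*d) := by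
    rw [← hv2, ← hv3, hposf, hposf]; exact hinc 2 3 (by omega) (by omega)
  have hp3 : posZ (E.symm (i 0) + 3*d) < posZ (E.symm (i 0) + 4*d) := by
    rw [← hv3, ← hv4, hposf, hposf]; exact hinc 3 4 (by omega) (by omega)
  have hp4 : posZ (E.symm (i 0) + 4*d) < posZ (E.symm (i 0) + 5*d) := by
    rw [← hv4, ← hv5, hposf, hposf]; exact hinc 4 5 (by omega) (by omega)
  exact no_AP6 (E.symm (i 0)) d hd hp0 hp1 hp2 hp3 hp4
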